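/- (Homological perturbation lemma) Given a strong deformation retract (W, d_W) ⇄ (V, d_V) with maps i, p, homotopy h satisfying p i = id_W, id_V − i p = d_V h + h d_V, h² = 0, p h = 0, h i = 0, and a perturbation μ of d_V (i.e. (d_V + μ)² = 0) such that (1 + hμ) is invertible, the formulas h_μ = (1 + hμ)⁻¹ h, i_μ = (1 + hμ)⁻¹ i, p_μ = p (1 + μh)⁻¹, and d_W^μ = d_W + p μ (1 + hμ)⁻¹ i define a new strong deformation retract between (W, d_W^μ) and (V, d_V + μ). -/
import Mathlib


/-- Homological perturbation lemma. Given a strong deformation retract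
`(W, d_W) ⇄ (V, d_V)` with data `(i, p, h)` and a perturbation `μ` of `d_V`, such that
`1 + hμ` (and hence `1 + μh`) is invertible (with inverses `A` and `B`), the perturbed
data `h_μ = A h`, `i_μ = A i`, `p_μ = p B`, `d_W^μ = d_W + p μ A i` form a new strong
deformation retract between `(W, d_W^μ)` and `(V, d_V + μ)`. -/
theorem homological_perturbation_lemma {K V W : Type*} [Field K]
    [AddCommGroup V] [Module K V] [AddCommGroup W] [Module K W]
    (dV : Module.End K V) (dW : Module.End K W)
    (i : W →ₗ[K] V) (p : V →ₗ[K] W) (h : Module.End K V) (μ : Module.End K V)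
    (hdV : dV * dV = 0) (hdW : dW * dW = 0)
    -- i, p are chain maps
    (hi : dV ∘ₗ i = i ∘ₗ dW) (hp : dW ∘ₗ p = p ∘ₗ dV)
    -- strong deformation retract conditions
    (hpi : p ∘ₗ i = LinearMap.id)
    (hretr : (LinearMap.id : V →ₗ[K] V) - i ∘ₗ p = dV ∘ₗ h + h ∘ₗ dV)
    (hh2 : h * h = 0) (hph : p ∘ₗ h = 0) (hhi : h ∘ₗ i = 0)
    -- μ is a perturbation
    (hpert : (dV + μ) * (dV + μ) = 0)
    -- invertibility of 1 + hμ and of 1 + μh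
    (A : Module.End K V) (hA1 : (1 + h * μ) * A = 1) (hA2 : A * (1 + h * μ) = 1)
    (B : Module.End K V) (hB1 : (1 + μ * h) * B = 1) (hB2 : B * (1 + μ * h) = 1) :
    -- the perturbed differential on W squares to zero
    ((dW + p ∘ₗ (μ ∘ₗ (A ∘ₗ i))) ∘ₗ (dW + p ∘ₗ (μ ∘ₗ (A ∘ₗ i))) = 0) ∧
    -- i_μ and p_μ are chain maps for the perturbed differentials
    ((dV + μ) ∘ₗ (A ∘ₗ i) = (A ∘ₗ i) ∘ₗ (dW + p ∘ₗ (μ ∘ₗ (A ∘ₗ i)))) ∧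
    ((dW + p ∘ₗ (μ ∘ₗ (A ∘ₗ i))) ∘ₗ (p ∘ₗ B) = (p ∘ₗ B) ∘ₗ (dV + μ)) ∧
    -- retract equations
    ((p ∘ₗ B) ∘ₗ (A ∘ₗ i) = LinearMap.id) ∧
    ((LinearMap.id : V →ₗ[K] V) - (A ∘ₗ i) ∘ₗ (p ∘ₗ B)
        = (dV + μ) ∘ₗ (A ∘ₗ h) + (A ∘ₗ h) ∘ₗ (dV + μ)) ∧
    -- side conditions
    ((A ∘ₗ h) ∘ₗ (A ∘ₗ h) = 0) ∧
    ((p ∘ₗ B) ∘ₗ (A ∘ₗ h) = 0) ∧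
    ((A ∘ₗ h) ∘ₗ (A ∘ₗ i) = 0) := by
  -- abbreviation for the projector i ∘ p, viewed as an endomorphism of V
  set q : Module.End K V := i ∘ₗ p with hqdef
  have Hr : (1 : Module.End K V) - q = dV * h + h * dV := hretr
  have Hm : dV * μ + μ * dV + μ * μ = 0 := by
    linear_combination (norm := noncomm_ring) hpert - hdV
  -- pure endomorphism-ring lemmas
  have LhA : h * A = h := by
    linear_combination (norm := noncomm_ring) h * hA1 - hh2 * (μ * A)
  have LBh : B * h = h := by
    linear_combination (norm := noncomm_ring) hB2 * h - (B * μ) * hh2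
  have LAh : A * h = h * B := by
    linear_combination (norm := noncomm_ring) hA2 * (h * B) - (A * h) * hB1
  have LBm : B * μ = μ * A := by
    linear_combination (norm := noncomm_ring) hB2 * (μ * A) - (B * μ) * hA1
  have L1A : h * (μ * A) = 1 - A := by
    linear_combination (norm := noncomm_ring) hA1
  have L1B : μ * (h * B) = 1 - B := by
    linear_combination (norm := noncomm_ring) hB1
  have LAhm : A * (h * μ) = 1 - A := by
    linear_combination (norm := noncomm_ring) hA2
  have LmAh : μ * (A * h) = 1 - B := by
    linear_combination (norm := noncomm_ring) μ * LAh + hB1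
  have key1 : (1 + h * μ) * ((dV + μ) * A) = dV + q * (μ * A) := by
    linear_combination (norm := noncomm_ring) dV * hA1 + h * Hm * A + Hr * (μ * A)
  have key2 : (B * (dV + μ)) * (1 + μ * h) = dV + (μ * A) * q := by
    linear_combination (norm := noncomm_ring) hB2 * dV + B * Hm * h + (B * μ) * Hr + LBm * q
  have LDA : (dV + μ) * A = A * (dV + q * (μ * A)) := by
    linear_combination (norm := noncomm_ring) A * key1 - hA2 * ((dV + μ) * A)
  have LBD : B * (dV + μ) = (dV + (μ * A) * q) * B := by
    linear_combination (norm := noncomm_ring) key2 * B - (B * (dV + μ)) * hB1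
  have LBA : B * A = B - h * (μ * A) := by
    linear_combination (norm := noncomm_ring) B * hA1 - LBh * (μ * A)
  have LBAh : B * (A * h) = h * B := by
    linear_combination (norm := noncomm_ring) B * LAh + LBh * B
  -- the homotopy identity, purely in End V
  have E1 : (dV + μ) * (A * h) = A * (dV * h) + A * (q * (μ * (A * h))) := by
    linear_combination (norm := noncomm_ring) LDA * h
  have E2 : (A * h) * (dV + μ) = h * (dV * B) + (h * (μ * A)) * (q * B) := by
    linear_combination (norm := noncomm_ring) LAh * (dV + μ) + h * LBD
  have E3 : (dV + μ) * (A * h) = A * (dV * h) + A * (q * (1 - B)) := by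
    rw [E1, LmAh]
  have E4 : (A * h) * (dV + μ) = h * (dV * B) + (1 - A) * (q * B) := by
    rw [E2, L1A]
  have F : (1 : Module.End K V) - A * (q * B)
      = (A * (dV * h) + A * (q * (1 - B))) + (h * (dV * B) + (1 - A) * (q * B)) := by
    linear_combination (norm := noncomm_ring)
      A * Hr + Hr * B - A * Hr * B
      - (A * (h * dV)) * L1B - L1A * (dV * (h * B)) - h * LBm * (dV * (h * B))
      - LAh * (μ * (dV * (h * B)))
      + (A * h) * Hm * (h * B) - LAhm * (μ * (h * B)) - (1 - A) * L1B
  have goal5End : (1 : Module.End K V) - A * (q * B)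
      = (dV + μ) * (A * h) + (A * h) * (dV + μ) := by
    rw [E3, E4]; exact F
  have end6 : (A * h) * (A * h) = 0 := by
    linear_combination (norm := noncomm_ring) A * LhA * h + A * hh2
  -- mixed lemmas
  have Lmhi : ((1 : Module.End K V) + μ * h) ∘ₗ i = i := by
    rw [LinearMap.add_comp, Module.End.mul_eq_comp, LinearMap.comp_assoc, hhi,
      LinearMap.comp_zero, Module.End.one_eq_id, LinearMap.id_comp, add_zero]
  have LBi : B ∘ₗ i = i := by
    conv_lhs => rw [← Lmhi, ← LinearMap.comp_assoc, ← Module.End.mul_eq_comp, hB2,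
      Module.End.one_eq_id, LinearMap.id_comp]
  -- goal 4
  have goal4 : (p ∘ₗ B) ∘ₗ (A ∘ₗ i) = LinearMap.id := by
    rw [show (p ∘ₗ B) ∘ₗ (A ∘ₗ i) = p ∘ₗ ((B * A) ∘ₗ i) from rfl, LBA,
      LinearMap.sub_comp, LinearMap.comp_sub, LBi, hpi,
      show p ∘ₗ ((h * (μ * A)) ∘ₗ i) = (p ∘ₗ h) ∘ₗ ((μ * A) ∘ₗ i) from rfl,
      hph, LinearMap.zero_comp, sub_zero]
  -- goal 2
  have goal2 : (dV + μ) ∘ₗ (A ∘ₗ i) = (A ∘ₗ i) ∘ₗ (dW + p ∘ₗ (μ ∘ₗ (A ∘ₗ i))) := by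
    have t1 : (dV + μ) ∘ₗ (A ∘ₗ i) = A ∘ₗ ((dV + q * (μ * A)) ∘ₗ i) := by
      rw [show (dV + μ) ∘ₗ (A ∘ₗ i) = ((dV + μ) * A) ∘ₗ i from rfl, LDA]; rfl
    have t2 : (dV + q * (μ * A)) ∘ₗ i = i ∘ₗ (dW + p ∘ₗ (μ ∘ₗ (A ∘ₗ i))) := by
      rw [LinearMap.add_comp, hi, LinearMap.comp_add]; rfl
    rw [t1, t2]; rfl
  -- goal 3
  have goal3 : (dW + p ∘ₗ (μ ∘ₗ (A ∘ₗ i))) ∘ₗ (p ∘ₗ B) = (p ∘ₗ B) ∘ₗ (dV + μ) := by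
    have t1 : (p ∘ₗ B) ∘ₗ (dV + μ) = (p ∘ₗ (dV + (μ * A) * q)) ∘ₗ B := by
      rw [show (p ∘ₗ B) ∘ₗ (dV + μ) = p ∘ₗ (B * (dV + μ)) from rfl, LBD]; rfl
    have t2 : p ∘ₗ (dV + (μ * A) * q) = (dW + p ∘ₗ (μ ∘ₗ (A ∘ₗ i))) ∘ₗ p := by
      rw [LinearMap.comp_add, ← hp, LinearMap.add_comp]; rfl
    rw [t1, t2]; rfl
  -- goal 1
  have goal1 : (dW + p ∘ₗ (μ ∘ₗ (A ∘ₗ i))) ∘ₗ (dW + p ∘ₗ (μ ∘ₗ (A ∘ₗ i))) = 0 := by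
    calc (dW + p ∘ₗ (μ ∘ₗ (A ∘ₗ i))) ∘ₗ (dW + p ∘ₗ (μ ∘ₗ (A ∘ₗ i)))
        = (LinearMap.id ∘ₗ (dW + p ∘ₗ (μ ∘ₗ (A ∘ₗ i)))) ∘ₗ (dW + p ∘ₗ (μ ∘ₗ (A ∘ₗ i))) := by
          rw [LinearMap.id_comp]
      _ = (((p ∘ₗ B) ∘ₗ (A ∘ₗ i)) ∘ₗ (dW + p ∘ₗ (μ ∘ₗ (A ∘ₗ i)))) ∘ₗ (dW + p ∘ₗ (μ ∘ₗ (A ∘ₗ i))) := by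
          rw [goal4]
      _ = (p ∘ₗ B) ∘ₗ (((A ∘ₗ i) ∘ₗ (dW + p ∘ₗ (μ ∘ₗ (A ∘ₗ i)))) ∘ₗ (dW + p ∘ₗ (μ ∘ₗ (A ∘ₗ i)))) := rfl
      _ = (p ∘ₗ B) ∘ₗ (((dV + μ) ∘ₗ (A ∘ₗ i)) ∘ₗ (dW + p ∘ₗ (μ ∘ₗ (A ∘ₗ i)))) := by
          rw [← goal2]
      _ = (p ∘ₗ B) ∘ₗ ((dV + μ) ∘ₗ ((A ∘ₗ i) ∘ₗ (dW + p ∘ₗ (μ ∘ₗ (A ∘ₗ i))))) := rfl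
      _ = (p ∘ₗ B) ∘ₗ ((dV + μ) ∘ₗ ((dV + μ) ∘ₗ (A ∘ₗ i))) := by rw [← goal2]
      _ = (p ∘ₗ B) ∘ₗ (((dV + μ) * (dV + μ)) ∘ₗ (A ∘ₗ i)) := rfl
      _ = 0 := by rw [hpert, LinearMap.zero_comp, LinearMap.comp_zero]
  -- goal 7
  have goal7 : (p ∘ₗ B) ∘ₗ (A ∘ₗ h) = 0 := by
    rw [show (p ∘ₗ B) ∘ₗ (A ∘ₗ h) = p ∘ₗ (B * (A * h)) from rfl, LBAh,
      show p ∘ₗ (h * B) = (p ∘ₗ h) ∘ₗ B from rfl, hph, LinearMap.zero_comp]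
  -- goal 8
  have goal8 : (A ∘ₗ h) ∘ₗ (A ∘ₗ i) = 0 := by
    rw [show (A ∘ₗ h) ∘ₗ (A ∘ₗ i) = A ∘ₗ ((h * A) ∘ₗ i) from rfl, LhA, hhi,
      LinearMap.comp_zero]
  exact ⟨goal1, goal2, goal3, goal4, goal5End, end6, goal7, goal8⟩
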